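/- arXiv:1308.5155 — 2 statements merged into one kernel-verified Lean document; each statement's English description precedes it below -/
import Mathlib

section
/- Let z ∈ ℂ satisfy θ[1;0](i, z)² = θ[0;1](i, z)², where the theta functions are taken at the period τ = i. Then z ∈ ℤ + ℤi. -/
open Complex

/-- The genus-one theta function with characteristic `[ε; δ]`. -/
noncomputable def theta1 (ε δ : ℤ) (τ z : ℂ) : ℂ :=
  ∑' n : ℤ,
    Complex.exp (↑Real.pi * I * ((n : ℂ) + (ε : ℂ)/2)^2 * τ +
      2 * ↑Real.pi * I * ((n : ℂ) + (ε : ℂ)/2) * (z + (δ : ℂ)/2))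

namespace Stmt18

local notation "π" => Real.pi

/-- sign coefficients -/
noncomputable def eps (m : ℤ) : ℝ := if m % 2 = 0 then (if m % 4 = 0 then -1 else 1) else 1

lemma eps_odd {m : ℤ} (h : m % 2 ≠ 0) : eps m = 1 := by simp [eps, h]

lemma eps_abs (m : ℤ) : |eps m| ≤ 1 := by
  rw [eps]; split_ifs <;> norm_num

lemma eps_neg (m : ℤ) : eps (-m) = eps m := by
  rw [eps, eps]
  have h2 : -m % 2 = 0 ↔ m % 2 = 0 := by omega
  have h4 : -m % 4 = 0 ↔ m % 4 = 0 := by omega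
  split_ifs with a b c d e <;> simp_all

lemma eps_add_two (m : ℤ) : eps (m + 2) = if m % 2 = 0 then -eps m else eps m := by
  rcases (by omega : m % 4 = 0 ∨ m % 4 = 1 ∨ m % 4 = 2 ∨ m % 4 = 3) with h|h|h|h
  · have a1 : (m+2) % 2 = 0 := by omega
    have a2 : (m+2) % 4 = 2 := by omega
    have a3 : m % 2 = 0 := by omega
    simp [eps, a1, a2, a3, h]
  · have a1 : (m+2) % 2 = 1 := by omega
    have a3 : m % 2 = 1 := by omega
    simp [eps, a1, a3]
  · have a1 : (m+2) % 2 = 0 := by omega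
    have a2 : (m+2) % 4 = 0 := by omega
    have a3 : m % 2 = 0 := by omega
    simp [eps, a1, a2, a3, h]
  · have a1 : (m+2) % 2 = 1 := by omega
    have a3 : m % 2 = 1 := by omega
    simp [eps, a1, a3]

/-- summand of the key series `D` -/
noncomputable def dterm (z : ℂ) (m : ℤ) : ℂ :=
  (eps m : ℂ) * Complex.exp (↑π * I * m * z - ↑π * m^2 / 4)

/-- the key series: `D z = θ[1;0](i,z) - θ[0;1](i,z)` -/
noncomputable def Dser (z : ℂ) : ℂ := ∑' m : ℤ, dterm z m

lemma cexp_int_pi (n : ℤ) : cexp (n * (↑π * I)) = if n % 2 = 0 then 1 else -1 := by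
  rcases Int.even_or_odd' n with ⟨k, rfl | rfl⟩
  · rw [if_pos (by omega)]
    have h : ((2*k : ℤ):ℂ) * (↑π * I) = k * (2 * ↑π * I) := by push_cast; ring
    rw [h, Complex.exp_int_mul, Complex.exp_two_pi_mul_I, one_zpow]
  · rw [if_neg (by omega)]
    have h : ((2*k+1 : ℤ):ℂ) * (↑π * I) = k * (2 * ↑π * I) + ↑π * I := by push_cast; ring
    rw [h, Complex.exp_add, Complex.exp_int_mul, Complex.exp_two_pi_mul_I, one_zpow, one_mul,
      Complex.exp_pi_mul_I]

lemma dterm_eq_jt (z : ℂ) (m : ℤ) :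
    dterm z m = (eps m : ℂ) * jacobiTheta₂_term m (z/2) (I/4) := by
  rw [dterm, jacobiTheta₂_term]
  congr 2
  linear_combination (-(↑π * (m:ℂ)^2) / 4) * I_mul_I

lemma summable_dterm (z : ℂ) : Summable (dterm z) := by
  have h : Summable (fun m : ℤ => jacobiTheta₂_term m (z/2) (I/4)) :=
    (summable_jacobiTheta₂_term_iff _ _).2 (by simp)
  refine Summable.of_norm_bounded (summable_norm_iff.mpr h) (fun m => ?_)
  rw [dterm_eq_jt, norm_mul]
  have h1 : ‖((eps m : ℝ) : ℂ)‖ ≤ 1 := by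
    rw [Complex.norm_real, Real.norm_eq_abs]; exact eps_abs m
  nlinarith [norm_nonneg (jacobiTheta₂_term m (z/2) (I/4)), h1]

lemma hasSum_dterm (z : ℂ) : HasSum (dterm z) (Dser z) := (summable_dterm z).hasSum

/-- even/odd split of a sum over `ℤ` -/
lemma hasSum_int_even_add_odd {f : ℤ → ℂ} {a b : ℂ}
    (he : HasSum (fun k : ℤ => f (2*k)) a) (ho : HasSum (fun k : ℤ => f (2*k+1)) b) :
    HasSum f (a + b) := by
  have h2 : Function.Injective (fun k : ℤ => 2*k) := fun x y h => by
    simp only [] at h; omega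
  have h1 : Function.Injective (fun k : ℤ => 2*k+1) := fun x y h => by
    simp only [] at h; omega
  refine HasSum.add_isCompl ?_ (h2.hasSum_range_iff.2 he) (h1.hasSum_range_iff.2 ho)
  have hre : Set.range (fun k : ℤ => 2*k) = {n : ℤ | Even n} := by
    ext n
    simp only [Set.mem_range, Set.mem_setOf_eq, Even]
    constructor <;> rintro ⟨k, hk⟩ <;> exact ⟨k, by omega⟩
  have hro : Set.range (fun k : ℤ => 2*k+1) = {n : ℤ | Odd n} := by
    ext n
    simp only [Set.mem_range, Set.mem_setOf_eq, Odd]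
    constructor <;> rintro ⟨k, hk⟩ <;> exact ⟨k, by omega⟩
  rw [hre, hro]
  exact Int.isCompl_even_odd

lemma eps_two_mul (n : ℤ) : eps (2*n) = if n % 2 = 0 then -1 else 1 := by
  rcases (by omega : n % 2 = 0 ∨ n % 2 = 1) with h|h
  · have a1 : (2*n) % 2 = 0 := by omega
    have a2 : (2*n) % 4 = 0 := by omega
    simp [eps, a1, a2, h]
  · have a1 : (2*n) % 2 = 0 := by omega
    have a2 : (2*n) % 4 = 2 := by omega
    simp [eps, a1, a2, h]

lemma summable_even (z : ℂ) : Summable (fun n : ℤ => dterm z (2*n)) :=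
  (summable_dterm z).comp_injective (fun x y h => by omega)

lemma summable_odd (z : ℂ) : Summable (fun n : ℤ => dterm z (2*n+1)) :=
  (summable_dterm z).comp_injective (fun x y h => by omega)

lemma theta1_10_eq (z : ℂ) : theta1 1 0 I z = ∑' n : ℤ, dterm z (2*n+1) := by
  rw [theta1]
  refine tsum_congr fun n => ?_
  rw [dterm, eps_odd (by omega)]
  push_cast
  rw [one_mul]
  congr 1
  linear_combination (↑π * ((n:ℂ)+1/2)^2) * I_mul_I

lemma theta1_01_eq (z : ℂ) : theta1 0 1 I z = -∑' n : ℤ, dterm z (2*n) := by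
  rw [theta1, ← tsum_neg]
  refine tsum_congr fun n => ?_
  rw [dterm, eps_two_mul]
  have hE : ↑π*I*((n:ℂ)+(((0:ℤ):ℂ))/2)^2*I + 2*↑π*I*((n:ℂ)+((0:ℤ):ℂ)/2)*(z+((1:ℤ):ℂ)/2)
      = (↑n * (↑π*I)) + (↑π*I*((2*n:ℤ):ℂ)*z - ↑π*((2*n:ℤ):ℂ)^2/4) := by
    push_cast
    linear_combination (↑π * (n:ℂ)^2) * I_mul_I
  rw [hE, Complex.exp_add, cexp_int_pi n]
  split_ifs <;> push_cast <;> ring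

lemma hasSum_even (z : ℂ) : HasSum (fun n : ℤ => dterm z (2*n)) (-(theta1 0 1 I z)) := by
  have h := (summable_even z).hasSum
  rwa [show (∑' n : ℤ, dterm z (2*n)) = -(theta1 0 1 I z) by rw [theta1_01_eq]; ring] at h

lemma hasSum_odd (z : ℂ) : HasSum (fun n : ℤ => dterm z (2*n+1)) (theta1 1 0 I z) := by
  have h := (summable_odd z).hasSum
  rwa [show (∑' n : ℤ, dterm z (2*n+1)) = theta1 1 0 I z from (theta1_10_eq z).symm] at h

lemma Dser_eq (z : ℂ) : Dser z = theta1 1 0 I z - theta1 0 1 I z := by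
  have h := hasSum_int_even_add_odd (hasSum_even z) (hasSum_odd z)
  rw [Dser, h.tsum_eq]; ring

lemma dterm_add_one (z : ℂ) (m : ℤ) :
    dterm (z+1) m = (if m % 2 = 0 then 1 else -1) * dterm z m := by
  rw [dterm, dterm]
  have h : ↑π*I*(m:ℂ)*(z+1) - ↑π*(m:ℂ)^2/4 = ↑m*(↑π*I) + (↑π*I*(m:ℂ)*z - ↑π*(m:ℂ)^2/4) := by
    ring
  rw [h, Complex.exp_add, cexp_int_pi]
  split_ifs <;> ring

lemma Dser_add_one (z : ℂ) : Dser (z+1) = -(theta1 1 0 I z + theta1 0 1 I z) := by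
  have he : HasSum (fun n : ℤ => dterm (z+1) (2*n)) (-(theta1 0 1 I z)) := by
    have := hasSum_even (z+1)
    rwa [show theta1 0 1 I (z+1) = theta1 0 1 I z from ?_] at this
    rw [theta1_01_eq, theta1_01_eq]
    congr 1
    refine tsum_congr fun n => ?_
    rw [dterm_add_one, if_pos (by omega), one_mul]
  have ho : HasSum (fun n : ℤ => dterm (z+1) (2*n+1)) (-(theta1 1 0 I z)) := by
    have h0 := (hasSum_odd z).neg
    have heq : (fun n : ℤ => dterm (z+1) (2*n+1)) = (fun n : ℤ => -(dterm z (2*n+1))) :=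
      funext fun n => by rw [dterm_add_one, if_neg (by omega)]; ring
    rw [heq]; exact h0
  have h := hasSum_int_even_add_odd he ho
  rw [Dser, h.tsum_eq]; ring

lemma dterm_quasi_p (z : ℂ) (m : ℤ) :
    dterm (z+1+I) m = -cexp (↑π - 2*↑π*I*z) * dterm z (m+2) := by
  rw [dterm, dterm, eps_add_two]
  have hE : ↑π*I*(m:ℂ)*(z+1+I) - ↑π*(m:ℂ)^2/4
      = ↑m*(↑π*I) + ((↑π - 2*↑π*I*z) + (↑π*I*((m+2:ℤ):ℂ)*z - ↑π*((m+2:ℤ):ℂ)^2/4)) := by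
    push_cast
    linear_combination (↑π*(m:ℂ)) * I_mul_I
  rw [hE, Complex.exp_add, Complex.exp_add, cexp_int_pi]
  split_ifs with h <;> push_cast <;> ring

lemma dterm_quasi_m (z : ℂ) (m : ℤ) :
    dterm (z+1-I) (m+2) = -cexp (↑π + 2*↑π*I*z) * dterm z m := by
  rw [dterm, dterm, eps_add_two]
  have hE : ↑π*I*((m+2:ℤ):ℂ)*(z+1-I) - ↑π*((m+2:ℤ):ℂ)^2/4
      = ↑m*(↑π*I) + (2*↑π*I) + ((↑π + 2*↑π*I*z) + (↑π*I*(m:ℂ)*z - ↑π*(m:ℂ)^2/4)) := by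
    push_cast
    linear_combination (-↑π*((m:ℂ)+2)) * I_mul_I
  rw [hE, Complex.exp_add, Complex.exp_add, Complex.exp_add, cexp_int_pi,
    Complex.exp_two_pi_mul_I]
  split_ifs with h <;> push_cast <;> ring

lemma Dser_quasi_p (z : ℂ) : Dser (z+1+I) = -cexp (↑π - 2*↑π*I*z) * Dser z := by
  rw [Dser, Dser]
  calc ∑' m : ℤ, dterm (z+1+I) m
      = ∑' m : ℤ, (-cexp (↑π - 2*↑π*I*z) * dterm z (m+2)) := tsum_congr (dterm_quasi_p z)
    _ = -cexp (↑π - 2*↑π*I*z) * ∑' m : ℤ, dterm z (m+2) := tsum_mul_left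
    _ = -cexp (↑π - 2*↑π*I*z) * ∑' m : ℤ, dterm z m := by
        congr 1
        simpa using (Equiv.addRight (2:ℤ)).tsum_eq (dterm z)

lemma Dser_quasi_m (z : ℂ) : Dser (z+1-I) = -cexp (↑π + 2*↑π*I*z) * Dser z := by
  rw [Dser, Dser]
  calc ∑' m : ℤ, dterm (z+1-I) m
      = ∑' m : ℤ, dterm (z+1-I) (m+2) := by
        simpa using ((Equiv.addRight (2:ℤ)).tsum_eq (dterm (z+1-I))).symm
    _ = ∑' m : ℤ, (-cexp (↑π + 2*↑π*I*z) * dterm z m) := tsum_congr (dterm_quasi_m z)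
    _ = -cexp (↑π + 2*↑π*I*z) * ∑' m : ℤ, dterm z m := tsum_mul_left

lemma theta1_10_jt (z : ℂ) : theta1 1 0 I z = cexp (↑π*I*z - ↑π/4) * jacobiTheta₂ (z + I/2) I := by
  rw [theta1, jacobiTheta₂, ← tsum_mul_left]
  refine tsum_congr fun n => ?_
  rw [jacobiTheta₂_term, ← Complex.exp_add]
  congr 1
  push_cast
  linear_combination ((↑π:ℂ)/4) * I_mul_I

lemma theta1_01_jt (z : ℂ) : theta1 0 1 I z = jacobiTheta₂ (z + 1/2) I := by
  rw [theta1, jacobiTheta₂]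
  refine tsum_congr fun n => ?_
  rw [jacobiTheta₂_term]
  congr 1
  push_cast
  ring

lemma jt_rot (w : ℂ) : jacobiTheta₂ w I = cexp (-↑π * w^2) * jacobiTheta₂ (I*w) I := by
  have h := jacobiTheta₂_functional_equation w I
  rw [show (-I*I : ℂ) = 1 by rw [neg_mul, I_mul_I, neg_neg],
    Complex.one_cpow,
    show (-1/I : ℂ) = I by rw [div_I]; ring,
    show (w/I : ℂ) = -(I*w) by rw [div_I]; ring,
    jacobiTheta₂_neg_left,
    show (-↑π*I*w^2/I : ℂ) = -↑π*w^2 by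
      field_simp] at h
  simpa using h

lemma theta_A_rot (z : ℂ) : theta1 1 0 I z = cexp (-↑π*z^2) * theta1 0 1 I (I*z) := by
  calc theta1 1 0 I z = cexp (↑π*I*z - ↑π/4) * jacobiTheta₂ (z + I/2) I := theta1_10_jt z
    _ = cexp (↑π*I*z - ↑π/4) * (cexp (-↑π*(z+I/2)^2) * jacobiTheta₂ (I*(z+I/2)) I) := by
        rw [← jt_rot]
    _ = cexp (-↑π*z^2) * jacobiTheta₂ (I*z + 1/2) I := by
        rw [show I*(z+I/2) = (I*z + 1/2) - 1 by linear_combination (1/2 : ℂ) * I_mul_I]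
        rw [show jacobiTheta₂ ((I*z + 1/2) - 1) I = jacobiTheta₂ (I*z + 1/2) I from by
          rw [← jacobiTheta₂_add_left ((I*z + 1/2) - 1) I]; ring_nf]
        rw [← mul_assoc, ← Complex.exp_add]
        congr 2
        linear_combination (-(↑π:ℂ)/4) * I_mul_I
    _ = cexp (-↑π*z^2) * theta1 0 1 I (I*z) := by rw [theta1_01_jt]

lemma theta_B_rot (z : ℂ) : theta1 0 1 I z = cexp (-↑π*z^2) * theta1 1 0 I (I*z) := by
  calc theta1 0 1 I z = jacobiTheta₂ (z + 1/2) I := theta1_01_jt z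
    _ = cexp (-↑π*(z+1/2)^2) * jacobiTheta₂ (I*(z+1/2)) I := jt_rot _
    _ = cexp (-↑π*z^2) * (cexp (↑π*I*(I*z) - ↑π/4) * jacobiTheta₂ ((I*z) + I/2) I) := by
        rw [show I*(z+1/2) = I*z + I/2 by ring]
        rw [← mul_assoc, ← Complex.exp_add]
        congr 2
        linear_combination (-(↑π:ℂ)*z) * I_mul_I
    _ = cexp (-↑π*z^2) * theta1 1 0 I (I*z) := by rw [← theta1_10_jt]

lemma Dser_rot (z : ℂ) : Dser (I*z) = -cexp (↑π * z^2) * Dser z := by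
  have hA : theta1 0 1 I (I*z) = cexp (↑π*z^2) * theta1 1 0 I z := by
    rw [theta_A_rot z, ← mul_assoc, ← Complex.exp_add]
    simp
  have hB : theta1 1 0 I (I*z) = cexp (↑π*z^2) * theta1 0 1 I z := by
    rw [theta_B_rot z, ← mul_assoc, ← Complex.exp_add]
    simp
  rw [Dser_eq, Dser_eq, hA, hB]
  ring

lemma Dser_zero : Dser 0 = 0 := by
  have h := Dser_rot 0
  rw [mul_zero] at h
  simp only [ne_eq, OfNat.ofNat_ne_zero, not_false_eq_true, zero_pow, mul_zero,
    Complex.exp_zero] at h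
  have h2 : (2:ℂ) * Dser 0 = 0 := by linear_combination h
  have := mul_eq_zero.mp h2
  simpa using this

/-- partial geometric-type factor -/
noncomputable def Uf (z : ℂ) (n : ℕ) : ℂ :=
  cexp (-(↑π)*I*z*((n:ℂ)-1)/2) * (∑ j ∈ Finset.range n, cexp (↑π*I*z)^j)

/-- summand of the quotient series `Q` -/
noncomputable def Qterm (z : ℂ) (n : ℕ) : ℂ :=
  ((eps n * Real.exp (-π*(n:ℝ)^2/4) : ℝ) : ℂ) * (Uf z n)^2

lemma Uf_key (z : ℂ) (n : ℕ) :
    (cexp (↑π*I*z/2) - cexp (-(↑π)*I*z/2)) * Uf z n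
      = cexp (↑π*I*(n:ℂ)*z/2) - cexp (-(↑π)*I*(n:ℂ)*z/2) := by
  rw [Uf]
  have h1 : cexp (↑π*I*z/2) - cexp (-(↑π)*I*z/2)
      = cexp (-(↑π)*I*z/2) * (cexp (↑π*I*z) - 1) := by
    rw [mul_sub, mul_one, ← Complex.exp_add]
    congr 2
    ring
  calc (cexp (↑π*I*z/2) - cexp (-(↑π)*I*z/2))
        * (cexp (-(↑π)*I*z*((n:ℂ)-1)/2) * (∑ j ∈ Finset.range n, cexp (↑π*I*z)^j))
      = cexp (-(↑π)*I*z/2) * cexp (-(↑π)*I*z*((n:ℂ)-1)/2)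
          * ((∑ j ∈ Finset.range n, cexp (↑π*I*z)^j) * (cexp (↑π*I*z) - 1)) := by
        rw [h1]; ring
    _ = cexp (-(↑π)*I*z/2) * cexp (-(↑π)*I*z*((n:ℂ)-1)/2) * (cexp (↑π*I*z)^n - 1) := by
        rw [geom_sum_mul]
    _ = cexp (-(↑π)*I*(n:ℂ)*z/2) * (cexp (↑π*I*z)^n - 1) := by
        rw [← Complex.exp_add]
        congr 2
        ring
    _ = cexp (↑π*I*(n:ℂ)*z/2) - cexp (-(↑π)*I*(n:ℂ)*z/2) := by
        rw [← Complex.exp_nat_mul, mul_sub, mul_one, ← Complex.exp_add]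
        congr 2
        ring

lemma Uf_sq (z : ℂ) (n : ℕ) :
    (cexp (↑π*I*z/2) - cexp (-(↑π)*I*z/2))^2 * (Uf z n)^2
      = cexp (↑π*I*(n:ℂ)*z) + cexp (-(↑π)*I*(n:ℂ)*z) - 2 := by
  have key := Uf_key z n
  have e1 : cexp (↑π*I*(n:ℂ)*z/2) * cexp (↑π*I*(n:ℂ)*z/2) = cexp (↑π*I*(n:ℂ)*z) := by
    rw [← Complex.exp_add]; congr 1; ring
  have e2 : cexp (-(↑π)*I*(n:ℂ)*z/2) * cexp (-(↑π)*I*(n:ℂ)*z/2) = cexp (-(↑π)*I*(n:ℂ)*z) := by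
    rw [← Complex.exp_add]; congr 1; ring
  have e3 : cexp (↑π*I*(n:ℂ)*z/2) * cexp (-(↑π)*I*(n:ℂ)*z/2) = 1 := by
    rw [← Complex.exp_add, show ↑π*I*(n:ℂ)*z/2 + -(↑π)*I*(n:ℂ)*z/2 = 0 by ring,
      Complex.exp_zero]
  have expand : ((cexp (↑π*I*z/2) - cexp (-(↑π)*I*z/2)) * Uf z n)^2
      = (cexp (↑π*I*(n:ℂ)*z/2) - cexp (-(↑π)*I*(n:ℂ)*z/2))^2 := by rw [key]
  calc (cexp (↑π*I*z/2) - cexp (-(↑π)*I*z/2))^2 * (Uf z n)^2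
      = ((cexp (↑π*I*z/2) - cexp (-(↑π)*I*z/2)) * Uf z n)^2 := by ring
    _ = (cexp (↑π*I*(n:ℂ)*z/2) - cexp (-(↑π)*I*(n:ℂ)*z/2))^2 := expand
    _ = cexp (↑π*I*(n:ℂ)*z) + cexp (-(↑π)*I*(n:ℂ)*z) - 2 := by
        linear_combination e1 + e2 - 2*e3

lemma dterm_pair (z : ℂ) (n : ℕ) :
    dterm z (n:ℤ) + dterm z (-(n:ℤ)) - (dterm 0 (n:ℤ) + dterm 0 (-(n:ℤ)))
      = (cexp (↑π*I*z/2) - cexp (-(↑π)*I*z/2))^2 * Qterm z n := by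
  rw [dterm, dterm, dterm, dterm, eps_neg, Qterm]
  push_cast
  have h1 : cexp (↑π*I*(n:ℂ)*z - ↑π*(n:ℂ)^2/4)
      = cexp (↑π*I*(n:ℂ)*z) * cexp (-(↑π)*(n:ℂ)^2/4) := by
    rw [← Complex.exp_add]; congr 1; ring
  have h2 : cexp (↑π*I*(-(n:ℂ))*z - ↑π*(-(n:ℂ))^2/4)
      = cexp (-(↑π)*I*(n:ℂ)*z) * cexp (-(↑π)*(n:ℂ)^2/4) := by
    rw [← Complex.exp_add]; congr 1; ring
  have h3 : cexp (↑π*I*(n:ℂ)*0 - ↑π*(n:ℂ)^2/4) = cexp (-(↑π)*(n:ℂ)^2/4) := by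
    congr 1; ring
  have h4 : cexp (↑π*I*(-(n:ℂ))*0 - ↑π*(-(n:ℂ))^2/4) = cexp (-(↑π)*(n:ℂ)^2/4) := by
    congr 1; ring
  rw [h1, h2, h3, h4]
  have := Uf_sq z n
  linear_combination (-((eps n : ℝ) : ℂ) * cexp (-(↑π)*(n:ℂ)^2/4)) * this

lemma dterm_zero_val (z : ℂ) : dterm z 0 = -1 := by
  rw [dterm]
  have : eps 0 = -1 := by simp [eps]
  rw [this]
  norm_num

lemma hasSum_Qmul (z : ℂ) :
    HasSum (fun n : ℕ => (cexp (↑π*I*z/2) - cexp (-(↑π)*I*z/2))^2 * Qterm z n) (Dser z) := by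
  have hz := (hasSum_dterm z).nat_add_neg
  have h0 := (hasSum_dterm 0).nat_add_neg
  have h := hz.sub h0
  have hval : Dser z + dterm z 0 - (Dser 0 + dterm 0 0) = Dser z := by
    rw [Dser_zero, dterm_zero_val, dterm_zero_val]; ring
  rw [hval] at h
  rw [show (fun n : ℕ => dterm z (n:ℤ) + dterm z (-(n:ℤ)) - (dterm 0 (n:ℤ) + dterm 0 (-(n:ℤ))))
      = (fun n : ℕ => (cexp (↑π*I*z/2) - cexp (-(↑π)*I*z/2))^2 * Qterm z n)
    from funext (dterm_pair z)] at h
  exact h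

lemma hasSum_Q (z : ℂ) (hz : Dser z = 0)
    (hc : cexp (↑π*I*z/2) - cexp (-(↑π)*I*z/2) ≠ 0) :
    HasSum (Qterm z) 0 := by
  have h := hasSum_Qmul z
  rw [hz] at h
  have h2 := h.mul_left (((cexp (↑π*I*z/2) - cexp (-(↑π)*I*z/2))^2)⁻¹)
  simp only [← mul_assoc, inv_mul_cancel₀ (pow_ne_zero 2 hc), one_mul, mul_zero] at h2
  exact h2

lemma exp_up {x : ℝ} (hx : 0 ≤ x) (hx1 : x < 1) : Real.exp x ≤ (1 - x)⁻¹ := by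
  have h := Real.add_one_le_exp (-x)
  rw [Real.exp_neg] at h
  have h2 : 0 < 1 - x := by linarith
  have h3 := Real.exp_pos x
  have h4 : Real.exp x * (1 - x) ≤ 1 := by
    calc Real.exp x * (1 - x) ≤ Real.exp x * (Real.exp x)⁻¹ := by
          apply mul_le_mul_of_nonneg_left _ h3.le
          linarith
      _ = 1 := mul_inv_cancel₀ (ne_of_gt h3)
  rw [inv_eq_one_div, le_div_iff₀ h2]
  linarith

lemma exp_quarter_up : Real.exp (π/4) ≤ 2.2859 := by
  have h0 : Real.exp 0.098175 ≤ 1.10887 := by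
    have h := exp_up (x := 0.098175) (by norm_num) (by norm_num)
    calc Real.exp 0.098175 ≤ (1 - 0.098175)⁻¹ := h
      _ ≤ 1.10887 := by norm_num
  have h1 : (π:ℝ)/4 ≤ 0.7854 := by linarith [Real.pi_lt_d6]
  have h2 : Real.exp (π/4) ≤ Real.exp 0.7854 := Real.exp_le_exp.mpr h1
  have h3 : Real.exp 0.7854 = Real.exp 0.098175 ^ (8:ℕ) := by
    rw [← Real.exp_nat_mul]; norm_num
  have h4 : Real.exp 0.098175 ^ (8:ℕ) ≤ 1.10887^(8:ℕ) :=
    pow_le_pow_left₀ (Real.exp_pos _).le h0 8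
  calc Real.exp (π/4) ≤ Real.exp 0.098175 ^ (8:ℕ) := by rw [← h3]; exact h2
    _ ≤ 1.10887^(8:ℕ) := h4
    _ ≤ 2.2859 := by norm_num

lemma exp_neg_quarter_lo : 0.437 ≤ Real.exp (-(π/4)) := by
  rw [Real.exp_neg]
  have h := exp_quarter_up
  have h2 : (0:ℝ) < Real.exp (π/4) := Real.exp_pos _
  rw [le_inv_comm₀ (by norm_num) h2]
  calc Real.exp (π/4) ≤ 2.2859 := h
    _ ≤ (0.437)⁻¹ := by norm_num

lemma exp_half_up : Real.exp (π/2) ≤ 5.2254 := by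
  have h : Real.exp (π/2) = Real.exp (π/4) * Real.exp (π/4) := by
    rw [← Real.exp_add]; ring_nf
  rw [h]
  have := exp_quarter_up
  nlinarith [Real.exp_pos ((π:ℝ)/4)]

lemma exp_neg_half_up : Real.exp (-(π/2)) ≤ 0.39 := by
  rw [Real.exp_neg]
  have h1 : (2.5707:ℝ) ≤ Real.exp (π/2) := by
    have := Real.add_one_le_exp ((π:ℝ)/2)
    have := Real.pi_gt_d6
    linarith
  rw [inv_le_comm₀ (by linarith) (by norm_num)]
  calc (0.39:ℝ)⁻¹ ≤ 2.5707 := by norm_num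
    _ ≤ Real.exp (π/2) := h1

lemma exp_one_cube : (20.0855:ℝ) ≤ Real.exp 1 ^ (3:ℕ) := by
  have h : (2.7182818283:ℝ) ≤ Real.exp 1 := Real.exp_one_gt_d9.le
  calc (20.0855:ℝ) ≤ 2.7182818283^(3:ℕ) := by norm_num
    _ ≤ Real.exp 1 ^ (3:ℕ) := pow_le_pow_left₀ (by norm_num) h 3

lemma exp_one_pow7 : (1096.6:ℝ) ≤ Real.exp 1 ^ (7:ℕ) := by
  have h : (2.7182818283:ℝ) ≤ Real.exp 1 := Real.exp_one_gt_d9.le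
  calc (1096.6:ℝ) ≤ 2.7182818283^(7:ℕ) := by norm_num
    _ ≤ Real.exp 1 ^ (7:ℕ) := pow_le_pow_left₀ (by norm_num) h 7

lemma exp_one_pow4 : (54.598:ℝ) ≤ Real.exp 1 ^ (4:ℕ) := by
  have h : (2.7182818283:ℝ) ≤ Real.exp 1 := Real.exp_one_gt_d9.le
  calc (54.598:ℝ) ≤ 2.7182818283^(4:ℕ) := by norm_num
    _ ≤ Real.exp 1 ^ (4:ℕ) := pow_le_pow_left₀ (by norm_num) h 4

lemma exp_neg_pi_up : Real.exp (-π) ≤ 0.0437 := by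
  rw [Real.exp_neg]
  have h1 : (22.9:ℝ) ≤ Real.exp π := by
    have hp : (3.141592:ℝ) ≤ π := Real.pi_gt_d6.le
    have h2 : Real.exp 3.141592 = Real.exp 1 ^ (3:ℕ) * Real.exp 0.141592 := by
      rw [← Real.exp_nat_mul, ← Real.exp_add]; norm_num
    have h3 : (1.141592:ℝ) ≤ Real.exp 0.141592 := by
      have := Real.add_one_le_exp (0.141592:ℝ); linarith
    have h4 : Real.exp 3.141592 ≤ Real.exp π := Real.exp_le_exp.mpr hp
    have := exp_one_cube
    nlinarith [Real.exp_pos (0.141592:ℝ)]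
  rw [inv_le_comm₀ (by linarith) (by norm_num)]
  calc (0.0437:ℝ)⁻¹ ≤ 22.9 := by norm_num
    _ ≤ Real.exp π := h1

lemma exp_neg_94_up : Real.exp (-(9*π/4)) ≤ 0.000913 := by
  rw [Real.exp_neg]
  have h1 : (1096.6:ℝ) ≤ Real.exp (9*π/4) := by
    have hp : (7:ℝ) ≤ 9*π/4 := by nlinarith [Real.pi_gt_d6]
    have h2 : Real.exp 7 = Real.exp 1 ^ (7:ℕ) := by
      rw [← Real.exp_nat_mul]; norm_num
    have h4 : Real.exp 7 ≤ Real.exp (9*π/4) := Real.exp_le_exp.mpr hp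
    have := exp_one_pow7
    linarith [h2 ▸ h4]
  rw [inv_le_comm₀ (by linarith) (by norm_num)]
  calc (0.000913:ℝ)⁻¹ ≤ 1096.6 := by norm_num
    _ ≤ Real.exp (9*π/4) := h1

lemma exp_neg_52_up : Real.exp (-(5*π/2)) ≤ 0.000492 := by
  rw [Real.exp_neg]
  have h1 : (2033:ℝ) ≤ Real.exp (5*π/2) := by
    have hp : (7.85398:ℝ) ≤ 5*π/2 := by nlinarith [Real.pi_gt_d6]
    have h2 : Real.exp 7.85398 = Real.exp 1 ^ (7:ℕ) * Real.exp 0.85398 := by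
      rw [← Real.exp_nat_mul, ← Real.exp_add]; norm_num
    have h3 : (1.85398:ℝ) ≤ Real.exp 0.85398 := by
      have := Real.add_one_le_exp (0.85398:ℝ); linarith
    have h4 : Real.exp 7.85398 ≤ Real.exp (5*π/2) := Real.exp_le_exp.mpr hp
    have := exp_one_pow7
    nlinarith [Real.exp_pos (0.85398:ℝ)]
  rw [inv_le_comm₀ (by linarith) (by norm_num)]
  calc (0.000492:ℝ)⁻¹ ≤ 2033 := by norm_num
    _ ≤ Real.exp (5*π/2) := h1

lemma exp_neg_32_up : Real.exp (-(3*π/2)) ≤ 0.0107 := by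
  rw [Real.exp_neg]
  have h1 : (93.49:ℝ) ≤ Real.exp (3*π/2) := by
    have hp : (4.712388:ℝ) ≤ 3*π/2 := by nlinarith [Real.pi_gt_d6]
    have h2 : Real.exp 4.712388 = Real.exp 1 ^ (4:ℕ) * Real.exp 0.712388 := by
      rw [← Real.exp_nat_mul, ← Real.exp_add]; norm_num
    have h3 : (1.712388:ℝ) ≤ Real.exp 0.712388 := by
      have := Real.add_one_le_exp (0.712388:ℝ); linarith
    have h4 : Real.exp 4.712388 ≤ Real.exp (3*π/2) := Real.exp_le_exp.mpr hp
    have := exp_one_pow4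
    nlinarith [Real.exp_pos (0.712388:ℝ)]
  rw [inv_le_comm₀ (by linarith) (by norm_num)]
  calc (0.0107:ℝ)⁻¹ ≤ 93.49 := by norm_num
    _ ≤ Real.exp (3*π/2) := h1

lemma norm_cexp_aIz (a : ℝ) (z : ℂ) : ‖cexp ((a:ℂ) * (↑π*I*z))‖ = Real.exp (-(a * π * z.im)) := by
  rw [Complex.norm_exp]
  congr 1
  have h : ((a:ℂ) * (↑π*I*z)) = ((a*π : ℝ):ℂ) * (I*z) := by push_cast; ring
  rw [h]
  simp [Complex.mul_re, Complex.mul_im, Complex.I_re, Complex.I_im]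

lemma norm_Uf_le (z : ℂ) (hy : |z.im| ≤ 1/2) (n : ℕ) :
    ‖Uf z n‖ ≤ (n:ℝ) * Real.exp (π*((n:ℝ)-1)/4) := by
  rw [Uf, Finset.mul_sum]
  have hterm : ∀ j ∈ Finset.range n,
      ‖cexp (-(↑π)*I*z*((n:ℂ)-1)/2) * cexp (↑π*I*z)^j‖ ≤ Real.exp (π*((n:ℝ)-1)/4) := by
    intro j hj
    have hj' : (j:ℝ) ≤ (n:ℝ) - 1 := by
      have := Finset.mem_range.mp hj
      have : (j:ℝ) + 1 ≤ (n:ℝ) := by exact_mod_cast this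
      linarith
    have hj0 : (0:ℝ) ≤ (j:ℝ) := Nat.cast_nonneg j
    rw [norm_mul, norm_pow]
    have e1 : -(↑π)*I*z*((n:ℂ)-1)/2 = ((-(((n:ℝ))-1)/2 : ℝ):ℂ) * (↑π*I*z) := by
      push_cast; ring
    have e2 : (↑π*I*z : ℂ) = ((1:ℝ):ℂ) * (↑π*I*z) := by norm_num
    rw [e1, norm_cexp_aIz]
    rw [e2, norm_cexp_aIz]
    rw [← Real.exp_nat_mul, ← Real.exp_add]
    rw [Real.exp_le_exp]
    have habs := abs_le.mp hy
    have key : z.im * (((n:ℝ)-1)/2 - (j:ℝ)) ≤ (((n:ℝ)-1)/2) * (1/2) := by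
      nlinarith [habs.1, habs.2, hj', hj0]
    have hpi := Real.pi_pos
    nlinarith [key]
  calc ‖∑ j ∈ Finset.range n, cexp (-(↑π)*I*z*((n:ℂ)-1)/2) * cexp (↑π*I*z)^j‖
      ≤ ∑ j ∈ Finset.range n, ‖cexp (-(↑π)*I*z*((n:ℂ)-1)/2) * cexp (↑π*I*z)^j‖ :=
        norm_sum_le _ _
    _ ≤ ∑ _j ∈ Finset.range n, Real.exp (π*((n:ℝ)-1)/4) := Finset.sum_le_sum hterm
    _ = (n:ℝ) * Real.exp (π*((n:ℝ)-1)/4) := by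
        rw [Finset.sum_const, Finset.card_range, nsmul_eq_mul]

lemma norm_Qterm_le (z : ℂ) (hy : |z.im| ≤ 1/2) (n : ℕ) :
    ‖Qterm z n‖ ≤ (n:ℝ)^2 * Real.exp (-π*(n:ℝ)^2/4 + π*((n:ℝ)-1)/2) := by
  rw [Qterm, norm_mul, norm_pow, Complex.norm_real, Real.norm_eq_abs, abs_mul, Real.abs_exp]
  have h1 : |eps ↑n| * Real.exp (-π*(n:ℝ)^2/4) ≤ Real.exp (-π*(n:ℝ)^2/4) := by
    have := eps_abs (n:ℤ)
    nlinarith [Real.exp_pos (-π*(n:ℝ)^2/4)]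
  have h2 : ‖Uf z n‖^2 ≤ ((n:ℝ) * Real.exp (π*((n:ℝ)-1)/4))^2 :=
    pow_le_pow_left₀ (norm_nonneg _) (norm_Uf_le z hy n) 2
  have h3 : Real.exp (-π*(n:ℝ)^2/4) * ((n:ℝ) * Real.exp (π*((n:ℝ)-1)/4))^2
      = (n:ℝ)^2 * Real.exp (-π*(n:ℝ)^2/4 + π*((n:ℝ)-1)/2) := by
    have e : Real.exp (π*((n:ℝ)-1)/4) ^ (2:ℕ) = Real.exp (π*((n:ℝ)-1)/2) := by
      rw [← Real.exp_nat_mul]; congr 1; push_cast; ring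
    rw [mul_pow, e, Real.exp_add]
    ring
  calc |eps ↑n| * Real.exp (-π*(n:ℝ)^2/4) * ‖Uf z n‖^2
      ≤ Real.exp (-π*(n:ℝ)^2/4) * ((n:ℝ) * Real.exp (π*((n:ℝ)-1)/4))^2 := by
        apply mul_le_mul h1 h2 (by positivity) (Real.exp_pos _).le
    _ = (n:ℝ)^2 * Real.exp (-π*(n:ℝ)^2/4 + π*((n:ℝ)-1)/2) := h3

lemma exp_quarter_lo : (2.15:ℝ) ≤ Real.exp (π/4) := by
  have h1 : (0.785398:ℝ) ≤ π/4 := by linarith [Real.pi_gt_d6]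
  have h2 : Real.exp 0.785398 ≤ Real.exp (π/4) := Real.exp_le_exp.mpr h1
  have h3 : Real.exp 0.785398 = Real.exp 0.049087375 ^ (16:ℕ) := by
    rw [← Real.exp_nat_mul]; norm_num
  have h4 : (1.049087375:ℝ) ≤ Real.exp 0.049087375 := by
    have := Real.add_one_le_exp (0.049087375:ℝ); linarith
  have h5 : (1.049087375:ℝ)^(16:ℕ) ≤ Real.exp 0.049087375 ^ (16:ℕ) :=
    pow_le_pow_left₀ (by norm_num) h4 16
  have h6 : (2.15:ℝ) ≤ (1.049087375:ℝ)^(16:ℕ) := by norm_num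
  calc (2.15:ℝ) ≤ (1.049087375:ℝ)^(16:ℕ) := h6
    _ ≤ Real.exp 0.049087375 ^ (16:ℕ) := h5
    _ = Real.exp 0.785398 := h3.symm
    _ ≤ Real.exp (π/4) := h2

lemma exp_neg_quarter_up : Real.exp (-(π/4)) ≤ 0.4652 := by
  rw [Real.exp_neg]
  rw [inv_le_comm₀ (by positivity) (by norm_num)]
  calc (0.4652:ℝ)⁻¹ ≤ 2.15 := by norm_num
    _ ≤ Real.exp (π/4) := exp_quarter_lo

lemma sq_le_pow2 (k : ℕ) : ((k:ℝ)+4)^2 ≤ 16 * 2^k := by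
  induction k with
  | zero => norm_num
  | succ k ih =>
    have hk : (0:ℝ) ≤ (k:ℝ) := Nat.cast_nonneg k
    have h : ((k:ℝ)+1+4)^2 ≤ 2*(((k:ℝ)+4)^2) := by nlinarith
    calc ((↑(k+1):ℝ)+4)^2 = ((k:ℝ)+1+4)^2 := by push_cast; ring
      _ ≤ 2*(((k:ℝ)+4)^2) := h
      _ ≤ 2*(16 * 2^k) := by linarith
      _ = 16 * 2^(k+1) := by ring

lemma tail_term_le (z : ℂ) (hy : |z.im| ≤ 1/2) (k : ℕ) :
    ‖Qterm z (k+4)‖ ≤ (16 * Real.exp (-(5*π/2))) * (2 * Real.exp (-(3*π/2)))^k := by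
  refine (norm_Qterm_le z hy (k+4)).trans ?_
  have hcast : ((k+4:ℕ):ℝ) = (k:ℝ)+4 := by push_cast; ring
  rw [hcast]
  have e1 : -π*((k:ℝ)+4)^2/4 + π*(((k:ℝ)+4)-1)/2
      = (-(5*π/2)) + ((k:ℕ):ℝ)*(-(3*π/2)) + (-(π*(k:ℝ)^2/4)) := by push_cast; ring
  rw [e1, Real.exp_add, Real.exp_add, Real.exp_nat_mul]
  have h2 : Real.exp (-(π*(k:ℝ)^2/4)) ≤ 1 := by
    rw [Real.exp_le_one_iff]
    have := Real.pi_pos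
    nlinarith [sq_nonneg (k:ℝ)]
  have h3 := sq_le_pow2 k
  calc ((k:ℝ)+4)^2 * (Real.exp (-(5*π/2)) * Real.exp (-(3*π/2))^k * Real.exp (-(π*(k:ℝ)^2/4)))
      ≤ ((k:ℝ)+4)^2 * (Real.exp (-(5*π/2)) * Real.exp (-(3*π/2))^k * 1) := by
        apply mul_le_mul_of_nonneg_left _ (sq_nonneg _)
        apply mul_le_mul_of_nonneg_left h2 (by positivity)
    _ ≤ (16 * 2^k) * (Real.exp (-(5*π/2)) * Real.exp (-(3*π/2))^k * 1) := by
        apply mul_le_mul_of_nonneg_right h3 (by positivity)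
    _ = (16 * Real.exp (-(5*π/2))) * (2 * Real.exp (-(3*π/2)))^k := by
        rw [mul_pow]; ring

lemma tail_sum_le (z : ℂ) (hy : |z.im| ≤ 1/2) :
    ∑' k : ℕ, ‖Qterm z (k+4)‖ ≤ 0.0082 := by
  have hρ0 : (0:ℝ) ≤ 2 * Real.exp (-(3*π/2)) := by positivity
  have hρ1 : 2 * Real.exp (-(3*π/2)) < 1 := by nlinarith [exp_neg_32_up]
  have hg : Summable (fun k : ℕ => (16 * Real.exp (-(5*π/2))) * (2 * Real.exp (-(3*π/2)))^k) :=
    (summable_geometric_of_lt_one hρ0 hρ1).mul_left _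
  have hs : Summable (fun k : ℕ => ‖Qterm z (k+4)‖) :=
    Summable.of_nonneg_of_le (fun k => norm_nonneg _) (tail_term_le z hy) hg
  calc ∑' k : ℕ, ‖Qterm z (k+4)‖
      ≤ ∑' k : ℕ, (16 * Real.exp (-(5*π/2))) * (2 * Real.exp (-(3*π/2)))^k :=
        Summable.tsum_le_tsum (tail_term_le z hy) hs hg
    _ = (16 * Real.exp (-(5*π/2))) * (1 - 2 * Real.exp (-(3*π/2)))⁻¹ := by
        rw [tsum_mul_left, tsum_geometric_of_lt_one hρ0 hρ1]
    _ ≤ 0.0082 := by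
        have h1 := exp_neg_52_up
        have h2 := exp_neg_32_up
        have h3 : (0:ℝ) < 1 - 2 * Real.exp (-(3*π/2)) := by nlinarith
        have h4 : (1 - 2 * Real.exp (-(3*π/2)))⁻¹ ≤ (0.9786:ℝ)⁻¹ := by
          apply inv_anti₀ (by norm_num)
          nlinarith
        have h5 : (0:ℝ) < (1 - 2 * Real.exp (-(3*π/2)))⁻¹ := by positivity
        nlinarith [Real.exp_pos (-(5*π/2))]

lemma Qterm_zero (z : ℂ) : Qterm z 0 = 0 := by
  simp [Qterm, Uf]

lemma Qterm_one (z : ℂ) : Qterm z 1 = ((Real.exp (-(π/4)) : ℝ) : ℂ) := by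
  rw [Qterm, Uf]
  have h1 : eps ((1:ℕ):ℤ) = 1 := eps_odd (by norm_num)
  rw [h1]
  rw [Finset.sum_range_one, pow_zero]
  rw [show -(↑π)*I*z*(((1:ℕ):ℂ)-1)/2 = 0 by push_cast; ring, Complex.exp_zero]
  push_cast
  norm_num
  congr 1
  ring

lemma Uf_two (z : ℂ) : Uf z 2 = cexp (↑π*I*z/2) + cexp (-(↑π)*I*z/2) := by
  rw [Uf, Finset.sum_range_succ, Finset.sum_range_one, pow_zero, pow_one, mul_add, mul_one,
    ← Complex.exp_add, add_comm]
  congr 1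
  · congr 1; push_cast; ring
  · congr 1; push_cast; ring

lemma Uf_three (z : ℂ) : Uf z 3 = cexp (-(↑π)*I*z) + 1 + cexp (↑π*I*z) := by
  rw [Uf, Finset.sum_range_succ, Finset.sum_range_succ, Finset.sum_range_one, pow_zero, pow_one]
  rw [show cexp (↑π*I*z)^2 = cexp (↑π*I*z*2) from by
    rw [← Complex.exp_nat_mul]; congr 1; push_cast; ring]
  rw [mul_add, mul_add, mul_one, ← Complex.exp_add, ← Complex.exp_add]
  congr 1
  · congr 1
    · congr 1; push_cast; ring
    · rw [show -(↑π)*I*z*(((3:ℕ):ℂ)-1)/2 + ↑π*I*z = 0 from by push_cast; ring,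
        Complex.exp_zero]
  · congr 1; push_cast; ring

lemma two_exp_bound {y c : ℝ} (hy : |y| ≤ c) :
    Real.exp y + Real.exp (-y) ≤ Real.exp c + Real.exp (-c) := by
  have habs := abs_le.mp hy
  have h1 : Real.exp y ≤ Real.exp c := Real.exp_le_exp.mpr habs.2
  have h2 : Real.exp (-y) ≤ Real.exp c := Real.exp_le_exp.mpr (by linarith)
  have h3 : Real.exp y * Real.exp (-y) = 1 := by rw [← Real.exp_add]; simp
  have h4 : Real.exp c * Real.exp (-c) = 1 := by rw [← Real.exp_add]; simp
  nlinarith [Real.exp_pos c, Real.exp_pos (-c), Real.exp_pos y, Real.exp_pos (-y),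
    mul_nonneg (sub_nonneg.2 h1) (sub_nonneg.2 h2)]

lemma abs_scale (a y : ℝ) (ha : 0 ≤ a) (hy : |y| ≤ 1/2) : |a * y| ≤ a/2 := by
  rw [abs_mul, _root_.abs_of_nonneg ha]
  nlinarith [abs_nonneg y]

lemma norm_Uf_two (z : ℂ) (hy : |z.im| ≤ 1/2) :
    ‖Uf z 2‖ ≤ Real.exp (π/4) + Real.exp (-(π/4)) := by
  rw [Uf_two]
  have hA : ‖cexp (↑π*I*z/2)‖ = Real.exp (-((1/2)*π*z.im)) := by
    rw [show (↑π*I*z/2 : ℂ) = ((((1:ℝ)/2):ℝ):ℂ) * (↑π*I*z) from by push_cast; ring,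
      norm_cexp_aIz]
  have hB : ‖cexp (-(↑π)*I*z/2)‖ = Real.exp ((1/2)*π*z.im) := by
    rw [show (-(↑π)*I*z/2 : ℂ) = ((((-1:ℝ)/2):ℝ):ℂ) * (↑π*I*z) from by push_cast; ring,
      norm_cexp_aIz]
    congr 1; ring
  refine (norm_add_le _ _).trans ?_
  rw [hA, hB]
  have habs : |(1/2)*π*z.im| ≤ π/4 := by
    have := abs_scale ((1/2)*π) z.im (by positivity) hy
    calc |(1/2)*π*z.im| ≤ ((1/2)*π)/2 := this
      _ = π/4 := by ring
  have := two_exp_bound habs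
  linarith

lemma norm_Uf_three (z : ℂ) (hy : |z.im| ≤ 1/2) :
    ‖Uf z 3‖ ≤ Real.exp (π/2) + Real.exp (-(π/2)) + 1 := by
  rw [Uf_three]
  have hA : ‖cexp (-(↑π)*I*z)‖ = Real.exp (π*z.im) := by
    rw [show (-(↑π)*I*z : ℂ) = (((-1:ℝ)):ℂ) * (↑π*I*z) from by push_cast; ring,
      norm_cexp_aIz]
    congr 1; ring
  have hB : ‖cexp (↑π*I*z)‖ = Real.exp (-(π*z.im)) := by
    rw [show (↑π*I*z : ℂ) = (((1:ℝ)):ℂ) * (↑π*I*z) from by push_cast; ring,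
      norm_cexp_aIz]
    congr 1; ring
  have habs : |π*z.im| ≤ π/2 := by
    have := abs_scale π z.im Real.pi_pos.le hy
    linarith
  have hbd := two_exp_bound habs
  calc ‖cexp (-(↑π)*I*z) + 1 + cexp (↑π*I*z)‖
      ≤ ‖cexp (-(↑π)*I*z) + 1‖ + ‖cexp (↑π*I*z)‖ := norm_add_le _ _
    _ ≤ ‖cexp (-(↑π)*I*z)‖ + ‖(1:ℂ)‖ + ‖cexp (↑π*I*z)‖ := by
        have := norm_add_le (cexp (-(↑π)*I*z)) (1:ℂ)
        linarith
    _ = Real.exp (π*z.im) + 1 + Real.exp (-(π*z.im)) := by rw [hA, hB, norm_one]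
    _ ≤ Real.exp (π/2) + Real.exp (-(π/2)) + 1 := by linarith

lemma norm_Q2 (z : ℂ) (hy : |z.im| ≤ 1/2) :
    ‖Qterm z 2‖ ≤ Real.exp (-π) * (Real.exp (π/4) + Real.exp (-(π/4)))^2 := by
  rw [Qterm, norm_mul, norm_pow, Complex.norm_real, Real.norm_eq_abs, abs_mul, Real.abs_exp]
  have heps : |eps ((2:ℕ):ℤ)| = 1 := by norm_num [eps]
  rw [heps, one_mul]
  have hexp : Real.exp (-π*((2:ℕ):ℝ)^2/4) = Real.exp (-π) := by
    congr 1; push_cast; ring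
  rw [hexp]
  have h2 : ‖Uf z 2‖^2 ≤ (Real.exp (π/4) + Real.exp (-(π/4)))^2 :=
    pow_le_pow_left₀ (norm_nonneg _) (norm_Uf_two z hy) 2
  have := Real.exp_pos (-π)
  nlinarith

lemma norm_Q3 (z : ℂ) (hy : |z.im| ≤ 1/2) :
    ‖Qterm z 3‖ ≤ Real.exp (-(9*π/4)) * (Real.exp (π/2) + Real.exp (-(π/2)) + 1)^2 := by
  rw [Qterm, norm_mul, norm_pow, Complex.norm_real, Real.norm_eq_abs, abs_mul, Real.abs_exp]
  have heps : |eps ((3:ℕ):ℤ)| = 1 := by norm_num [eps]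
  rw [heps, one_mul]
  have hexp : Real.exp (-π*((3:ℕ):ℝ)^2/4) = Real.exp (-(9*π/4)) := by
    congr 1; push_cast; ring
  rw [hexp]
  have h2 : ‖Uf z 3‖^2 ≤ (Real.exp (π/2) + Real.exp (-(π/2)) + 1)^2 :=
    pow_le_pow_left₀ (norm_nonneg _) (norm_Uf_three z hy) 2
  have := Real.exp_pos (-(9*π/4))
  nlinarith

set_option maxHeartbeats 1000000 in
lemma Qsum_ne_zero (z : ℂ) (hy : |z.im| ≤ 1/2) : ¬ HasSum (Qterm z) 0 := by
  intro hQ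
  have hsum := hQ.summable
  have htsum := hQ.tsum_eq
  have hsplit := Summable.sum_add_tsum_nat_add 4 hsum
  rw [htsum] at hsplit
  have hrange : ∑ i ∈ Finset.range 4, Qterm z i = Qterm z 1 + Qterm z 2 + Qterm z 3 := by
    rw [Finset.sum_range_succ, Finset.sum_range_succ, Finset.sum_range_succ,
      Finset.sum_range_one, Qterm_zero]
    ring
  have key : ((Real.exp (-(π/4)) : ℝ) : ℂ)
      = -(Qterm z 2 + Qterm z 3 + ∑' k : ℕ, Qterm z (k+4)) := by
    rw [← Qterm_one z]
    rw [hrange] at hsplit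
    linear_combination hsplit
  have hnorm := congrArg norm key
  rw [Complex.norm_real, Real.norm_eq_abs, Real.abs_exp, norm_neg] at hnorm
  have hle : Real.exp (-(π/4)) ≤ ‖Qterm z 2‖ + ‖Qterm z 3‖ + ‖∑' k : ℕ, Qterm z (k+4)‖ := by
    rw [hnorm]
    calc ‖Qterm z 2 + Qterm z 3 + ∑' k : ℕ, Qterm z (k+4)‖
        ≤ ‖Qterm z 2 + Qterm z 3‖ + ‖∑' k : ℕ, Qterm z (k+4)‖ := norm_add_le _ _
      _ ≤ ‖Qterm z 2‖ + ‖Qterm z 3‖ + ‖∑' k : ℕ, Qterm z (k+4)‖ := by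
          have := norm_add_le (Qterm z 2) (Qterm z 3)
          linarith
  have htail : ‖∑' k : ℕ, Qterm z (k+4)‖ ≤ 0.0082 := by
    have hs2 : Summable (fun k : ℕ => Qterm z (k+4)) := (summable_nat_add_iff (f := Qterm z) 4).mpr hsum
    have := norm_tsum_le_tsum_norm (summable_norm_iff.mpr hs2)
    exact this.trans (tail_sum_le z hy)
  have b2 : ‖Qterm z 2‖ ≤ 0.331 := by
    have h1 := exp_quarter_up
    have h2 := exp_neg_quarter_up
    have hb : Real.exp (π/4) + Real.exp (-(π/4)) ≤ 2.7511 := by linarith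
    have hb2 : (Real.exp (π/4) + Real.exp (-(π/4)))^2 ≤ 2.7511^2 :=
      pow_le_pow_left₀ (by positivity) hb 2
    have hn := norm_Q2 z hy
    have hc := exp_neg_pi_up
    have hpos : (0:ℝ) < Real.exp (-π) := Real.exp_pos _
    nlinarith [sq_nonneg (Real.exp (π/4) + Real.exp (-(π/4)))]
  have b3 : ‖Qterm z 3‖ ≤ 0.04 := by
    have h1 := exp_half_up
    have h2 := exp_neg_half_up
    have hb : Real.exp (π/2) + Real.exp (-(π/2)) + 1 ≤ 6.6154 := by linarith
    have hb2 : (Real.exp (π/2) + Real.exp (-(π/2)) + 1)^2 ≤ 6.6154^2 :=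
      pow_le_pow_left₀ (by positivity) hb 2
    have hn := norm_Q3 z hy
    have hc := exp_neg_94_up
    have hpos : (0:ℝ) < Real.exp (-(9*π/4)) := Real.exp_pos _
    nlinarith [sq_nonneg (Real.exp (π/2) + Real.exp (-(π/2)) + 1)]
  have hlo := exp_neg_quarter_lo
  linarith

lemma core (z : ℂ) (hy : |z.im| ≤ 1/2) (hD : Dser z = 0) : ∃ k : ℤ, z = 2*(k:ℂ) := by
  by_cases hc : cexp (↑π*I*z/2) - cexp (-(↑π)*I*z/2) = 0
  · have h2 : cexp (↑π*I*z/2) = cexp (-(↑π)*I*z/2) := sub_eq_zero.mp hc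
    have h3 : cexp (↑π*I*z/2) * cexp (↑π*I*z/2)
        = cexp (-(↑π)*I*z/2) * cexp (↑π*I*z/2) := by rw [h2]
    rw [← Complex.exp_add, ← Complex.exp_add,
      show ↑π*I*z/2 + ↑π*I*z/2 = ↑π*I*z by ring,
      show -(↑π)*I*z/2 + ↑π*I*z/2 = 0 by ring, Complex.exp_zero] at h3
    obtain ⟨k, hk⟩ := Complex.exp_eq_one_iff.mp h3
    refine ⟨k, ?_⟩
    have hpiI : (↑π*I : ℂ) ≠ 0 :=
      mul_ne_zero (Complex.ofReal_ne_zero.mpr Real.pi_ne_zero) I_ne_zero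
    apply mul_left_cancel₀ hpiI
    linear_combination hk
  · exact absurd (hasSum_Q z hD hc) (Qsum_ne_zero z hy)

lemma Dser_zero_iff_p (z : ℂ) : Dser (z+(1+I)) = 0 ↔ Dser z = 0 := by
  rw [show z+(1+I) = z+1+I by ring, Dser_quasi_p]
  constructor
  · intro h0
    rcases mul_eq_zero.mp h0 with h1 | h1
    · exact absurd (neg_eq_zero.mp h1) (Complex.exp_ne_zero _)
    · exact h1
  · intro h0; rw [h0, mul_zero]

lemma Dser_zero_iff_m (z : ℂ) : Dser (z+(1-I)) = 0 ↔ Dser z = 0 := by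
  rw [show z+(1-I) = z+1-I by ring, Dser_quasi_m]
  constructor
  · intro h0
    rcases mul_eq_zero.mp h0 with h1 | h1
    · exact absurd (neg_eq_zero.mp h1) (Complex.exp_ne_zero _)
    · exact h1
  · intro h0; rw [h0, mul_zero]

lemma Dser_zero_shift_p (j : ℤ) : ∀ z : ℂ, (Dser (z + (j:ℂ)*(1+I)) = 0 ↔ Dser z = 0) := by
  induction j using Int.induction_on with
  | zero => intro z; norm_num
  | succ n ih =>
    intro z
    have e : z + (((n:ℤ)+1 : ℤ):ℂ)*(1+I) = (z + ((n:ℤ):ℂ)*(1+I)) + (1+I) := by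
      push_cast; ring
    rw [e, Dser_zero_iff_p, ih z]
  | pred n ih =>
    intro z
    have e : (z + ((-(n:ℤ)-1 : ℤ):ℂ)*(1+I)) + (1+I) = z + ((-(n:ℤ) : ℤ):ℂ)*(1+I) := by
      push_cast; ring
    have h := Dser_zero_iff_p (z + ((-(n:ℤ)-1 : ℤ):ℂ)*(1+I))
    rw [e] at h
    exact h.symm.trans (ih z)

lemma Dser_zero_shift_m (k : ℤ) : ∀ z : ℂ, (Dser (z + (k:ℂ)*(1-I)) = 0 ↔ Dser z = 0) := by
  induction k using Int.induction_on with
  | zero => intro z; norm_num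
  | succ n ih =>
    intro z
    have e : z + (((n:ℤ)+1 : ℤ):ℂ)*(1-I) = (z + ((n:ℤ):ℂ)*(1-I)) + (1-I) := by
      push_cast; ring
    rw [e, Dser_zero_iff_m, ih z]
  | pred n ih =>
    intro z
    have e : (z + ((-(n:ℤ)-1 : ℤ):ℂ)*(1-I)) + (1-I) = z + ((-(n:ℤ) : ℤ):ℂ)*(1-I) := by
      push_cast; ring
    have h := Dser_zero_iff_m (z + ((-(n:ℤ)-1 : ℤ):ℂ)*(1-I))
    rw [e] at h
    exact h.symm.trans (ih z)

lemma Dser_lattice (z : ℂ) (hD : Dser z = 0) : ∃ m n : ℤ, z = (n:ℂ) + (m:ℂ)*I := by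
  set x := z.re with hx
  set y := z.im with hy
  set j : ℤ := ⌊(x+y)/2 + 1/2⌋ with hj
  set k : ℤ := ⌊(x-y)/2 + 1/2⌋ with hk
  set w : ℂ := z - (j:ℂ)*(1+I) - (k:ℂ)*(1-I) with hw
  have hzw : z = w + (j:ℂ)*(1+I) + (k:ℂ)*(1-I) := by rw [hw]; ring
  have hDw : Dser w = 0 := by
    have h1 : z = (w + (k:ℂ)*(1-I)) + (j:ℂ)*(1+I) := by rw [hzw]; ring
    rw [h1] at hD
    exact (Dser_zero_shift_m k w).mp ((Dser_zero_shift_p j (w + (k:ℂ)*(1-I))).mp hD)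
  have hwre : w.re = x - j - k := by
    rw [hw]
    simp [Complex.sub_re, Complex.mul_re, Complex.add_re, Complex.add_im,
      Complex.one_re, Complex.one_im, Complex.I_re, Complex.I_im, Complex.sub_im, hx]
  have hwim : w.im = y - j + k := by
    rw [hw]
    simp [Complex.sub_im, Complex.mul_im, Complex.add_re, Complex.add_im,
      Complex.one_re, Complex.one_im, Complex.I_re, Complex.I_im, Complex.sub_re, hy]
  have hjle := Int.floor_le ((x+y)/2 + 1/2)
  have hjlt := Int.lt_floor_add_one ((x+y)/2 + 1/2)
  have hkle := Int.floor_le ((x-y)/2 + 1/2)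
  have hklt := Int.lt_floor_add_one ((x-y)/2 + 1/2)
  rw [← hj] at hjle hjlt
  rw [← hk] at hkle hklt
  have hcell1 : |w.re + w.im| ≤ 1 := by
    rw [hwre, hwim]
    rw [abs_le]
    constructor <;> push_cast <;> linarith
  have hcell2 : |w.re - w.im| ≤ 1 := by
    rw [hwre, hwim]
    rw [abs_le]
    constructor <;> push_cast <;> linarith
  rcases le_or_gt |w.im| (1/2) with hcase | hcase
  · obtain ⟨t, ht⟩ := core w hcase hDw
    refine ⟨j - k, 2*t + j + k, ?_⟩
    rw [hzw, ht]
    push_cast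
    ring
  · have hre : |w.re| ≤ 1/2 := by
      have h1 := abs_le.mp hcell1
      have h2 := abs_le.mp hcell2
      rcases le_or_gt 0 w.im with hs | hs
      · have : 1/2 < w.im := by
          rw [_root_.abs_of_nonneg hs] at hcase; exact hcase
        rw [abs_le]; constructor <;> linarith
      · have : w.im < -(1/2) := by
          rw [_root_.abs_of_neg hs] at hcase; linarith
        rw [abs_le]; constructor <;> linarith
    have hw2 : Dser (-I*w) = 0 := by
      have h := Dser_rot (-I*w)
      rw [show I*(-I*w) = w from by linear_combination (-w)*I_mul_I, hDw] at h
      have h2 := h.symm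
      rcases mul_eq_zero.mp h2 with h3 | h3
      · exact absurd (neg_eq_zero.mp h3) (Complex.exp_ne_zero _)
      · exact h3
    have him2 : |(-I*w).im| ≤ 1/2 := by
      have e : (-I*w).im = -w.re := by
        simp [Complex.mul_im, Complex.I_re, Complex.I_im]
      rw [e, abs_neg]
      exact hre
    obtain ⟨t, ht⟩ := core (-I*w) him2 hw2
    have hwt : w = 2*(t:ℂ)*I := by
      linear_combination I*ht + w*I_mul_I
    refine ⟨2*t + j - k, j + k, ?_⟩
    rw [hzw, hwt]
    push_cast
    ring

end Stmt18

/-- If `θ[1;0](i,z)² = θ[0;1](i,z)²`, then `z` is a lattice point of `ℤ + ℤi`. -/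
theorem stmt_18 (z : ℂ) (h : theta1 1 0 I z ^ 2 = theta1 0 1 I z ^ 2) :
    ∃ m n : ℤ, z = (n : ℂ) + (m : ℂ) * I := by
  have hfac : Stmt18.Dser z * Stmt18.Dser (z+1) = 0 := by
    rw [Stmt18.Dser_eq, Stmt18.Dser_add_one]
    linear_combination -h
  rcases mul_eq_zero.mp hfac with h0 | h0
  · exact Stmt18.Dser_lattice z h0
  · obtain ⟨m, n, hmn⟩ := Stmt18.Dser_lattice (z+1) h0
    exact ⟨m, n - 1, by push_cast; linear_combination hmn⟩
end

section
/- Let v ∈ ℂ and let n₁, n₂ be odd integers. Write θ(w) := θ[0;0](i, w) for the genus-one theta function with zero characteristic at the period τ = i. Then θ((n₁ − n₂ i)v) − e^{2πi n₁ n₂ v²} θ((n₁ + n₂ i)v) + e^{−π(n₁² − n₂²)v²} ( θ((n₂ − n₁ i)v) − e^{2πi n₁ n₂ v²} θ((n₂ + n₁ i)v) ) = 0. -/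
open Complex

lemma theta1_eq_jacobiTheta₂ (τ z : ℂ) : theta1 0 0 τ z = jacobiTheta₂ z τ := by
  rw [theta1, jacobiTheta₂]
  refine tsum_congr fun n => ?_
  rw [jacobiTheta₂_term]
  congr 1
  push_cast
  ring

lemma jacobiTheta₂_I_mul (z : ℂ) :
    jacobiTheta₂ z I = Complex.exp (-(↑Real.pi) * z ^ 2) * jacobiTheta₂ (I * z) I := by
  have h := jacobiTheta₂_functional_equation z I
  have h1 : (-I * I : ℂ) = 1 := by simp [Complex.I_mul_I]
  have h2 : (-1 / I : ℂ) = I := by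
    field_simp
    rw [Complex.I_sq]
  have h3 : (z / I : ℂ) = -(I * z) := by
    field_simp
    linear_combination z * Complex.I_sq
  have h4 : (-(↑Real.pi) * I * z ^ 2 / I : ℂ) = -(↑Real.pi) * z ^ 2 := by
    field_simp
  rw [h, h1, h2, h3, h4, jacobiTheta₂_neg_left, one_cpow, one_div_one, one_mul]

/-- The four-term identity for `θ := θ[0;0](i, ·)` and odd integers `n₁, n₂`. -/
theorem stmt_19 (v : ℂ) (n₁ n₂ : ℤ) (h₁ : Odd n₁) (h₂ : Odd n₂) :
    theta1 0 0 I (((n₁ : ℂ) - (n₂ : ℂ) * I) * v) -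
        Complex.exp (2 * ↑Real.pi * I * (n₁ : ℂ) * (n₂ : ℂ) * v ^ 2) *
          theta1 0 0 I (((n₁ : ℂ) + (n₂ : ℂ) * I) * v) +
      Complex.exp (-(↑Real.pi) * ((n₁ : ℂ) ^ 2 - (n₂ : ℂ) ^ 2) * v ^ 2) *
        (theta1 0 0 I (((n₂ : ℂ) - (n₁ : ℂ) * I) * v) -
          Complex.exp (2 * ↑Real.pi * I * (n₁ : ℂ) * (n₂ : ℂ) * v ^ 2) *
            theta1 0 0 I (((n₂ : ℂ) + (n₁ : ℂ) * I) * v)) = 0 := by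
  simp only [theta1_eq_jacobiTheta₂]
  have e1 : jacobiTheta₂ (((n₁ : ℂ) - (n₂ : ℂ) * I) * v) I =
      Complex.exp ((-(↑Real.pi) * ((n₁ : ℂ) ^ 2 - (n₂ : ℂ) ^ 2) * v ^ 2) +
        (2 * ↑Real.pi * I * (n₁ : ℂ) * (n₂ : ℂ) * v ^ 2)) *
      jacobiTheta₂ (((n₂ : ℂ) + (n₁ : ℂ) * I) * v) I := by
    rw [jacobiTheta₂_I_mul]
    congr 2
    · linear_combination (-(Real.pi : ℂ) * (n₂ : ℂ) ^ 2 * v ^ 2) * Complex.I_sq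
    · linear_combination (-(n₂ : ℂ) * v) * Complex.I_sq
  have e3 : jacobiTheta₂ (((n₂ : ℂ) - (n₁ : ℂ) * I) * v) I =
      Complex.exp ((2 * ↑Real.pi * I * (n₁ : ℂ) * (n₂ : ℂ) * v ^ 2) -
        (-(↑Real.pi) * ((n₁ : ℂ) ^ 2 - (n₂ : ℂ) ^ 2) * v ^ 2)) *
      jacobiTheta₂ (((n₁ : ℂ) + (n₂ : ℂ) * I) * v) I := by
    rw [jacobiTheta₂_I_mul]
    congr 2
    · linear_combination (-(Real.pi : ℂ) * (n₁ : ℂ) ^ 2 * v ^ 2) * Complex.I_sq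
    · linear_combination (-(n₁ : ℂ) * v) * Complex.I_sq
  rw [e1, e3, Complex.exp_add, Complex.exp_sub]
  have hF := Complex.exp_ne_zero (-(↑Real.pi : ℂ) * ((n₁ : ℂ) ^ 2 - (n₂ : ℂ) ^ 2) * v ^ 2)
  field_simp
  ring
end
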